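/- Let a, b, σ be positive real numbers and ε ∈ (0,1]. The function f : (0,1) → ℝ defined by f(B) = B·log₂(1 + ε·a/((1−ε)·a + B·σ)) + (1−B)·log₂(1 + ε·b/((1−ε)·b + (1−B)·σ)) has derivative equal to 0 at the point B = a/(a+b); that is, HasDerivAt f 0 (a/(a+b)). -/

import Mathlib

/-- Appendix C critical-point computation: the OMA sum-rate, as a function of the
time/frequency fraction `B`, has derivative `0` at `B = a/(a+b)`. -/
theorem oma_sum_rate_hasDerivAt_zero
    (a b σ ε : ℝ) (ha : 0 < a) (hb : 0 < b) (hσ : 0 < σ)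
    (hε : 0 < ε) (hε1 : ε ≤ 1) :
    HasDerivAt
      (fun B : ℝ =>
        B * Real.logb 2 (1 + ε * a / ((1 - ε) * a + B * σ))
          + (1 - B) * Real.logb 2 (1 + ε * b / ((1 - ε) * b + (1 - B) * σ)))
      0 (a / (a + b)) := by
  have hab : 0 < a + b := by linarith
  have hεle : (0:ℝ) ≤ 1 - ε := by linarith
  obtain ⟨B₀, hB₀def⟩ : ∃ x : ℝ, x = a / (a + b) := ⟨_, rfl⟩
  rw [← hB₀def]
  have hB₀pos : 0 < B₀ := by rw [hB₀def]; exact div_pos ha hab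
  have h1B : (1 : ℝ) - B₀ = b / (a + b) := by
    rw [hB₀def]; field_simp; ring
  have h1Bpos : 0 < 1 - B₀ := by rw [h1B]; exact div_pos hb hab
  obtain ⟨D₁, hD₁def⟩ : ∃ x : ℝ, x = (1 - ε) * a + B₀ * σ := ⟨_, rfl⟩
  obtain ⟨D₂, hD₂def⟩ : ∃ x : ℝ, x = (1 - ε) * b + (1 - B₀) * σ := ⟨_, rfl⟩
  have hD₁ : 0 < D₁ := by rw [hD₁def]; exact add_pos_of_nonneg_of_pos (mul_nonneg hεle ha.le) (mul_pos hB₀pos hσ)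
  have hD₂ : 0 < D₂ := by rw [hD₂def]; exact add_pos_of_nonneg_of_pos (mul_nonneg hεle hb.le) (mul_pos h1Bpos hσ)
  obtain ⟨x₁, hx₁def⟩ : ∃ x : ℝ, x = 1 + ε * a / D₁ := ⟨_, rfl⟩
  obtain ⟨x₂, hx₂def⟩ : ∃ x : ℝ, x = 1 + ε * b / D₂ := ⟨_, rfl⟩
  have hx₁ : 0 < x₁ := by
    have : 0 < ε * a / D₁ := div_pos (mul_pos hε ha) hD₁
    rw [hx₁def]; linarith
  have hx₂ : 0 < x₂ := by
    have : 0 < ε * b / D₂ := div_pos (mul_pos hε hb) hD₂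
    rw [hx₂def]; linarith
  have hx12 : x₁ = x₂ := by
    have e1 : D₁ = a * ((1 - ε) + σ / (a + b)) := by rw [hD₁def, hB₀def]; ring
    have e2 : D₂ = b * ((1 - ε) + σ / (a + b)) := by rw [hD₂def, h1B]; ring
    rw [hx₁def, hx₂def, e1, e2, mul_comm ε a, mul_comm ε b,
      mul_div_mul_left _ _ ha.ne', mul_div_mul_left _ _ hb.ne']
  -- derivative of first denominator
  have hden1 : HasDerivAt (fun B : ℝ => (1 - ε) * a + B * σ) σ B₀ := by
    simpa using (((hasDerivAt_id B₀).mul_const σ).const_add ((1 - ε) * a))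
  have hden2 : HasDerivAt (fun B : ℝ => (1 - ε) * b + (1 - B) * σ) (-σ) B₀ := by
    have h : HasDerivAt (fun B : ℝ => (1 - B)) (-1) B₀ := by
      simpa using (hasDerivAt_id B₀).const_sub (1:ℝ)
    simpa using ((h.mul_const σ).const_add ((1 - ε) * b))
  have hq1 := (hasDerivAt_const B₀ (ε * a)).div hden1 (hD₁def ▸ hD₁.ne')
  have hq2 := (hasDerivAt_const B₀ (ε * b)).div hden2 (hD₂def ▸ hD₂.ne')
  have hg1 := hq1.const_add (1 : ℝ)
  have hg2 := hq2.const_add (1 : ℝ)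
  have hx₁' : (1 : ℝ) + ε * a / ((1 - ε) * a + B₀ * σ) ≠ 0 := by
    rw [← hD₁def, ← hx₁def]; exact hx₁.ne'
  have hx₂' : (1 : ℝ) + ε * b / ((1 - ε) * b + (1 - B₀) * σ) ≠ 0 := by
    rw [← hD₂def, ← hx₂def]; exact hx₂.ne'
  have hlog1 := hg1.log hx₁'
  have hlog2 := hg2.log hx₂'
  have hlb1 := hlog1.div_const (Real.log 2)
  have hlb2 := hlog2.div_const (Real.log 2)
  have hpre : HasDerivAt (fun B : ℝ => (1 : ℝ) - B) (-1) B₀ := by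
    simpa using (hasDerivAt_id B₀).const_sub (1:ℝ)
  have hterm1 := (hasDerivAt_id B₀).mul hlb1
  have hterm2 := hpre.mul hlb2
  have key := hterm1.add hterm2
  beta_reduce at key
  simp only [id_eq, Pi.div_apply] at key
  simp only [← hD₁def, ← hD₂def, ← hx₁def, ← hx₂def] at key
  have hnum : B₀ * ((0 * D₁ - ε * a * σ) / D₁ ^ 2)
      + (1 - B₀) * ((0 * D₂ - ε * b * (-σ)) / D₂ ^ 2) = 0 := by
    rw [hD₁def, hD₂def, h1B, hB₀def]
    field_simp
    ring
  simp only [Real.logb]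
  refine key.congr_deriv (Eq.symm ?_)
  rw [hx12]
  linear_combination (-(1 / (x₂ * Real.log 2))) * hnum
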